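/- Let F be a field and let a₀, a₁, b, f₀, f₁, f₂ be nonzero elements of F. Define the map S₀ : (a₀,a₁,b,f₀,f₁,f₂) ↦ (a₀^{-1}, a₀²a₁, b/a₀, f₀(a₀f₀+a₀+f₁)/(f₀+f₁+1), f₁(a₀f₀+f₁+1)/(a₀(f₀+f₁+1)), a₀f₂(f₀+f₁+1)²/((a₀f₀+a₀+f₁)(a₀f₀+f₁+1))). Then, whenever all intermediate denominators are nonzero, S₀ ∘ S₀ is the identity map on such tuples. (This is the relation s₀² = 1 of the birational representation of the extended affine Weyl group W̃((A₁+A₁')^{(1)}) on the f-variables of the A₆^{(1)}-surface q-Painlevé system.) -/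

import Mathlib

/-- The birational action of the generator `s₀` of `W̃((A₁+A₁')⁽¹⁾)` on the
tuple `(a₀, a₁, b, f₀, f₁, f₂)` for the `A₆⁽¹⁾`-surface `q`-Painlevé system. -/
def weylS0A6 {F : Type*} [Field F] :
    F × F × F × F × F × F → F × F × F × F × F × F
  | (a0, a1, b, f0, f1, f2) =>
    (a0⁻¹, a0 ^ 2 * a1, b / a0,
      f0 * (a0 * f0 + a0 + f1) / (f0 + f1 + 1),
      f1 * (a0 * f0 + f1 + 1) / (a0 * (f0 + f1 + 1)),
      a0 * f2 * (f0 + f1 + 1) ^ 2 / ((a0 * f0 + a0 + f1) * (a0 * f0 + f1 + 1)))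

/-- Nonvanishing of the denominators appearing in `s₀`. -/
def denS0A6 {F : Type*} [Field F] (x : F × F × F × F × F × F) : Prop :=
  match x with
  | (a0, _, _, f0, f1, _) =>
    f0 + f1 + 1 ≠ 0 ∧ a0 * f0 + a0 + f1 ≠ 0 ∧ a0 * f0 + f1 + 1 ≠ 0

set_option maxHeartbeats 1000000 in
/-- the relation `s₀² = 1` of the birational representation of
`W̃((A₁+A₁')⁽¹⁾)` on the `f`-variables of the `A₆⁽¹⁾`-surface
`q`-Painlevé system. -/
theorem weylS0A6_involutive
    (F : Type*) [Field F] (a0 a1 b f0 f1 f2 : F)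
    (ha0 : a0 ≠ 0) (ha1 : a1 ≠ 0) (hb : b ≠ 0)
    (hf0 : f0 ≠ 0) (hf1 : f1 ≠ 0) (hf2 : f2 ≠ 0)
    (h1 : denS0A6 (a0, a1, b, f0, f1, f2))
    (h2 : denS0A6 (weylS0A6 (a0, a1, b, f0, f1, f2))) :
    weylS0A6 (weylS0A6 (a0, a1, b, f0, f1, f2)) = (a0, a1, b, f0, f1, f2) := by
  obtain ⟨d1, d2, d3⟩ := h1
  clear h2
  have hA : (f0 * (a0 * f0 + a0 + f1) / (f0 + f1 + 1)) + (f1 * (a0 * f0 + f1 + 1) / (a0 * (f0 + f1 + 1))) + 1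
      = (a0 * f0 + a0 + f1) * (a0 * f0 + f1 + 1) / (a0 * (f0 + f1 + 1)) := by
    field_simp; ring
  have hB : a0⁻¹ * (f0 * (a0 * f0 + a0 + f1) / (f0 + f1 + 1)) + a0⁻¹ + (f1 * (a0 * f0 + f1 + 1) / (a0 * (f0 + f1 + 1)))
      = (a0 * f0 + f1 + 1) / a0 := by
    field_simp; ring
  have hC : a0⁻¹ * (f0 * (a0 * f0 + a0 + f1) / (f0 + f1 + 1)) + (f1 * (a0 * f0 + f1 + 1) / (a0 * (f0 + f1 + 1))) + 1
      = (a0 * f0 + a0 + f1) / a0 := by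
    field_simp; ring
  simp only [weylS0A6, Prod.mk.injEq]
  refine ⟨?_, ?_, ?_, ?_, ?_, ?_⟩
  · exact inv_inv a0
  · field_simp
  · field_simp
  · rw [hA, hB]; field_simp; apply div_self; convert mul_ne_zero d2 d3 using 1; ring
  · rw [hA, hC]; field_simp; apply div_self; convert d2 using 1; ring
  · rw [hA, hB, hC]
    have key : ∀ A B C : F, A ≠ 0 → B ≠ 0 → C ≠ 0 →
        a0⁻¹ * (a0 * f2 * A ^ 2 / (B * C)) * (B * C / (a0 * A)) ^ 2 / (C / a0 * (B / a0)) = f2 := by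
      intro A B C hA0 hB0 hC0
      field_simp
    exact key _ _ _ d1 d2 d3
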